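/- Let P be a field and let X be a class of commutative P-algebras given as a family A : κ → Type of commutative P-algebras. For every commutative P-algebra B (in a universe containing that of P and the family) the following are equivalent: (1) every infinitary quasiidentity that holds in all algebras A k also holds in B; (2) every finitely generated P-subalgebra of B admits an injective P-algebra homomorphism into a product ∏ (j : J), A (k j) for some index type J and some k : J → κ. (This is the equality tilde-qVar(X) = LSC(X) for the variety of commutative associative unital P-algebras.) -/

import Mathlib

open MvPolynomial

universe u v w

/-- tilde-qVar(X) = LSC(X) for the variety of commutative associative
unital P-algebras: B satisfies every infinitary quasiidentity of the class
X = {A k} iff every finitely generated P-subalgebra of B embeds into a product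
of members of X. -/
theorem tilde_qVar_eq_LSC (P : Type u) [Field P] {κ : Type v} (A : κ → Type w)
    [∀ k, CommRing (A k)] [∀ k, Algebra P (A k)]
    (B : Type (max u v w)) [CommRing B] [Algebra P B] :
    (∀ (n : ℕ) (T : Set (MvPolynomial (Fin n) P)) (f : MvPolynomial (Fin n) P),
        (∀ (k : κ) (μ : Fin n → A k),
            (∀ g ∈ T, aeval μ g = 0) → aeval μ f = 0) →
        ∀ μ : Fin n → B, (∀ g ∈ T, aeval μ g = 0) → aeval μ f = 0)
      ↔
    (∀ S : Subalgebra P B, S.FG →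
        ∃ (J : Type (max u v w)) (k : J → κ)
          (g : S →ₐ[P] ((j : J) → A (k j))), Function.Injective g) := by
  constructor
  · -- (1) → (2)
    intro H S hS
    obtain ⟨t, ht⟩ := hS
    classical
    set n := t.card with hn
    let b : Fin n → B := fun i => (t.equivFin.symm i : B)
    have hrange : Set.range b = (t : Set B) := by
      ext x
      constructor
      · rintro ⟨i, rfl⟩; exact (t.equivFin.symm i).2
      · intro hx; exact ⟨t.equivFin ⟨x, hx⟩, by simp [b]⟩
    have hadj : Algebra.adjoin P (Set.range b) = S := by rw [hrange, ht]
    have hmem : ∀ p : MvPolynomial (Fin n) P, aeval b p ∈ S := by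
      intro p
      rw [← hadj, Algebra.adjoin_range_eq_range_aeval]
      exact ⟨p, rfl⟩
    let π : MvPolynomial (Fin n) P →ₐ[P] S :=
      AlgHom.codRestrict (aeval b) S hmem
    have hπsurj : Function.Surjective π := by
      rintro ⟨s, hs⟩
      rw [← hadj, Algebra.adjoin_range_eq_range_aeval] at hs
      obtain ⟨p, hp⟩ := hs
      exact ⟨p, Subtype.ext hp⟩
    set I : Ideal (MvPolynomial (Fin n) P) := RingHom.ker π with hI
    set T : Set (MvPolynomial (Fin n) P) := {g | π g = 0} with hT
    -- For each f ∉ T, the quasiidentity (T ⊢ f) fails in B, hence fails in some A k.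
    have key : ∀ f : MvPolynomial (Fin n) P, f ∉ T →
        ∃ (k : κ) (μ : Fin n → A k), (∀ g ∈ T, aeval μ g = 0) ∧ aeval μ f ≠ 0 := by
      intro f hf
      by_contra hcon
      push_neg at hcon
      have h1 : ∀ (k : κ) (μ : Fin n → A k), (∀ g ∈ T, aeval μ g = 0) → aeval μ f = 0 := by
        intro k μ hμ
        exact hcon k μ hμ
      have h2 : aeval b f = 0 := by
        refine H n T f h1 b ?_
        intro g hg
        have : π g = 0 := hg
        have := congrArg (Subtype.val) this
        simpa [π] using this
      apply hf
      show π f = 0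
      exact Subtype.ext (by simpa [π] using h2)
    -- index type
    let J : Type (max u v w) := ULift.{max u v w} {f : MvPolynomial (Fin n) P // f ∉ T}
    let k : J → κ := fun j => (key j.down.1 j.down.2).choose
    let μ : ∀ j : J, Fin n → A (k j) := fun j => (key j.down.1 j.down.2).choose_spec.choose
    have hμ : ∀ j : J, (∀ g ∈ T, aeval (μ j) g = 0) ∧ aeval (μ j) j.down.1 ≠ 0 :=
      fun j => (key j.down.1 j.down.2).choose_spec.choose_spec
    -- big hom from the polynomial ring
    let G : MvPolynomial (Fin n) P →ₐ[P] ((j : J) → A (k j)) :=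
      Pi.algHom P _ (fun j => aeval (μ j))
    have hGI : ∀ a ∈ I, G a = 0 := by
      intro a ha
      have haT : a ∈ T := by
        have : π a = 0 := by rwa [hI, RingHom.mem_ker] at ha
        exact this
      funext j
      exact (hμ j).1 a haT
    let e : (MvPolynomial (Fin n) P ⧸ I) ≃ₐ[P] S :=
      Ideal.quotientKerAlgEquivOfSurjective hπsurj
    let G' : S →ₐ[P] ((j : J) → A (k j)) :=
      (Ideal.Quotient.liftₐ I G hGI).comp (e.symm : S →ₐ[P] (MvPolynomial (Fin n) P ⧸ I))
    have hesymm : ∀ p : MvPolynomial (Fin n) P, e.symm (π p) = Ideal.Quotient.mk I p := by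
      intro p
      apply e.injective
      simp only [AlgEquiv.apply_symm_apply]
      rfl
    have hG' : ∀ p : MvPolynomial (Fin n) P, G' (π p) = G p := by
      intro p
      show (Ideal.Quotient.liftₐ I G hGI) (e.symm (π p)) = G p
      rw [hesymm p]
      simp
      exact Ideal.Quotient.lift_mk _ _ _
    refine ⟨J, k, G', ?_⟩
    rw [injective_iff_map_eq_zero]
    intro s hs
    obtain ⟨p, rfl⟩ := hπsurj s
    by_contra hne
    have hpT : p ∉ T := by
      intro hp
      exact hne (hp : π p = 0)
    have := congrFun (hs ▸ (hG' p).symm) ⟨⟨p, hpT⟩⟩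
    exact (hμ ⟨⟨p, hpT⟩⟩).2 (by simpa [G] using this)
  · -- (2) → (1)
    intro H n T f hX μ hμ
    classical
    set S : Subalgebra P B := Algebra.adjoin P (Set.range μ) with hSdef
    have hSfg : S.FG := by
      refine ⟨(Set.finite_range μ).toFinset, ?_⟩
      rw [Set.Finite.coe_toFinset]
    obtain ⟨J, k, g, hg⟩ := H S hSfg
    let μ' : Fin n → S := fun i => ⟨μ i, Algebra.subset_adjoin (Set.mem_range_self i)⟩
    have hval : ∀ p : MvPolynomial (Fin n) P, (aeval μ' p : S) = (aeval μ p : B) := by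
      intro p
      have h := MvPolynomial.comp_aeval_apply (f := μ') S.val p
      have h2 : aeval (fun i => (S.val) (μ' i)) p = aeval μ p := rfl
      exact h.trans h2
    have hμ' : ∀ p ∈ T, aeval μ' p = 0 := by
      intro p hp
      apply Subtype.ext
      simpa [hval p] using hμ p hp
    have hcoord : ∀ j : J, aeval (fun i => g (μ' i) j) f = 0 := by
      intro j
      have hcomp : (Pi.evalAlgHom P (fun j => A (k j)) j).comp (g.comp (aeval μ')) =
          aeval (fun i => g (μ' i) j) := by
        apply MvPolynomial.algHom_ext
        intro i
        simp
      refine hX (k j) (fun i => g (μ' i) j) ?_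
      intro p hp
      have := DFunLike.congr_fun hcomp p
      rw [← this]
      simp [hμ' p hp]
    have : g (aeval μ' f) = 0 := by
      funext j
      have hcomp : (Pi.evalAlgHom P (fun j => A (k j)) j).comp (g.comp (aeval μ')) =
          aeval (fun i => g (μ' i) j) := by
        apply MvPolynomial.algHom_ext
        intro i
        simp
      have h3 : g (aeval μ' f) j = aeval (fun i => g (μ' i) j) f := by
        simpa using DFunLike.congr_fun hcomp f
      rw [Pi.zero_apply, h3]
      exact hcoord j
    have h0 : aeval μ' f = 0 := hg (by simpa using this)
    have := hval f
    rw [h0] at this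
    simpa using this.symm
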